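/- For all integers n, c, k with 0 ≤ c < k ≤ n/2, the inequality C(n, k-1-c) + C(n, c) ≤ C(n, k) holds. -/
import Mathlib

lemma choose_step_hk {m r : ℕ} (h : 2 * r + 1 ≤ m) : m.choose r ≤ m.choose (r + 1) := by
  have h1 := Nat.choose_succ_right_eq m r
  have key : m.choose r * (r + 1) ≤ m.choose (r + 1) * (r + 1) := by
    calc m.choose r * (r + 1) ≤ m.choose r * (m - r) :=
          Nat.mul_le_mul_left _ (by omega)
      _ = m.choose (r + 1) * (r + 1) := h1.symm
  exact Nat.le_of_mul_le_mul_right key (by omega)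

lemma choose_step_lt_hk {m r : ℕ} (h : 2 * r + 2 ≤ m) : m.choose r < m.choose (r + 1) := by
  have h1 := Nat.choose_succ_right_eq m r
  have hpos : 0 < m.choose r := Nat.choose_pos (by omega)
  have key : m.choose r * (r + 1) < m.choose (r + 1) * (r + 1) := by
    calc m.choose r * (r + 1) < m.choose r * (m - r) :=
          mul_lt_mul_of_pos_left (by omega) hpos
      _ = m.choose (r + 1) * (r + 1) := h1.symm
  exact Nat.lt_of_mul_lt_mul_right key

lemma key_hk : ∀ (n a c : ℕ), 2 * (a + c + 1) ≤ n →
    n.choose a + n.choose c ≤ n.choose (a + c + 1) := by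
  intro n
  induction n with
  | zero => intro a c h; omega
  | succ m ih =>
    intro a c h
    match a, c with
    | 0, c =>
      have hlt : (m + 1).choose c < (m + 1).choose (c + 1) :=
        choose_step_lt_hk (by omega)
      simp only [Nat.choose_zero_right, Nat.zero_add]
      omega
    | a + 1, 0 =>
      have hlt : (m + 1).choose (a + 1) < (m + 1).choose (a + 2) :=
        choose_step_lt_hk (by omega)
      have e : a + 1 + 0 + 1 = a + 2 := by omega
      rw [e]
      simp only [Nat.choose_zero_right]
      omega
    | a + 1, c + 1 =>
      have h1 := ih (a + 1) c (by omega)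
      rw [show a + 1 + c + 1 = a + c + 2 from by omega] at h1
      have h2 := ih a (c + 1) (by omega)
      rw [show a + (c + 1) + 1 = a + c + 2 from by omega] at h2
      have h3 : m.choose (a + c + 2) ≤ m.choose (a + c + 3) :=
        choose_step_hk (by omega)
      have e1 : (m + 1).choose (a + 1) = m.choose a + m.choose (a + 1) :=
        Nat.choose_succ_succ' m a
      have e2 : (m + 1).choose (c + 1) = m.choose c + m.choose (c + 1) :=
        Nat.choose_succ_succ' m c
      rw [show a + 1 + (c + 1) + 1 = (a + c + 2) + 1 from by omega]
      have e3 : (m + 1).choose ((a + c + 2) + 1) =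
          m.choose (a + c + 2) + m.choose ((a + c + 2) + 1) :=
        Nat.choose_succ_succ' m (a + c + 2)
      rw [e1, e2, e3]
      have : m.choose ((a + c + 2) + 1) = m.choose (a + c + 3) := by norm_num
      omega

/-- Hwang–Kim inequality: for `0 ≤ c < k ≤ n/2`, `C(n,k-1-c) + C(n,c) ≤ C(n,k)`. -/
theorem stmt2 (n c k : ℕ) (hck : c < k) (hkn : 2 * k ≤ n) :
    n.choose (k - 1 - c) + n.choose c ≤ n.choose k := by
  have hk : k = (k - 1 - c) + c + 1 := by omega
  have h := key_hk n (k - 1 - c) c (by omega)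
  rwa [← hk] at h
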